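/- Fix η > 0, T > 0 and a matrix A ∈ ℝ^{n×m}. For every measurable continuous-time strategy x : [0,T] → Δ_n and every initial history h0 ∈ ℝ^m, the optimizer's continuous-time reward against the Replicator Dynamics admits the closed form R_cont(x, h0, T) = (1/η)·[ ln( Σ_{i=1}^m exp(η·h0_i) ) − ln( Σ_{i=1}^m exp( η·( h0_i − e_i^⊤ A^⊤ ∫_0^T x(s) ds ) ) ) ]. In particular, R_cont(x, h0, T) depends on x only through the vector ∫_0^T x(s) ds. -/

import Mathlib

open MeasureTheory

/-- Componentwise cumulative play of a continuous-time strategy: `∫_0^t x(s) ds`. -/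
noncomputable def cumX {n : ℕ} (x : ℝ → Fin n → ℝ) (t : ℝ) (k : Fin n) : ℝ :=
  ∫ s in (0:ℝ)..t, x s k

/-- The Replicator Dynamics learner's mixed strategy at time `t`, with parameter `η`,
initial history `h0`, against the optimizer's strategy `x`, in the zero-sum game with
optimizer matrix `A` (learner matrix `−A`). -/
noncomputable def contPlay {n m : ℕ} (η : ℝ) (A : Matrix (Fin n) (Fin m) ℝ)
    (h0 : Fin m → ℝ) (x : ℝ → Fin n → ℝ) (t : ℝ) (i : Fin m) : ℝ :=
  Real.exp (η * (h0 i - ∑ k, cumX x t k * A k i)) /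
    ∑ j, Real.exp (η * (h0 j - ∑ k, cumX x t k * A k j))

/-- The optimizer's continuous-time reward `∫_0^T x(t)ᵀ A y(t) dt` against the
Replicator Dynamics. -/
noncomputable def Rcont {n m : ℕ} (η : ℝ) (A : Matrix (Fin n) (Fin m) ℝ)
    (h0 : Fin m → ℝ) (T : ℝ) (x : ℝ → Fin n → ℝ) : ℝ :=
  ∫ t in (0:ℝ)..T, ∑ k, ∑ i, x t k * A k i * contPlay η A h0 x t i

/-! ### Simplex helpers -/

lemma simplex_coord_bounds {n : ℕ} {v : Fin n → ℝ} (hv : v ∈ stdSimplex ℝ (Fin n)) (i : Fin n) :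
    0 ≤ v i ∧ v i ≤ 1 := by
  refine ⟨hv.1 i, ?_⟩
  have := Finset.single_le_sum (f := v) (fun j _ => hv.1 j) (Finset.mem_univ i)
  rw [hv.2] at this; exact this

lemma simplex_abs_le {n : ℕ} {v : Fin n → ℝ} (hv : v ∈ stdSimplex ℝ (Fin n)) (i : Fin n) :
    |v i| ≤ 1 := by
  rcases simplex_coord_bounds hv i with ⟨h0, h1⟩
  rw [abs_of_nonneg h0]; exact h1

lemma simplex_norm_le {n : ℕ} {v : Fin n → ℝ} (hv : v ∈ stdSimplex ℝ (Fin n)) : ‖v‖ ≤ 1 := by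
  rw [pi_norm_le_iff_of_nonneg zero_le_one]
  intro i; rw [Real.norm_eq_abs]; exact simplex_abs_le hv i

/-! ### A continuous retraction onto the simplex -/

noncomputable def sproj (n : ℕ) (v : Fin n → ℝ) : Fin n → ℝ :=
  fun i => max (v i) 0 / max (∑ j, max (v j) 0) 1
    + (1 - ∑ j, max (v j) 0 / max (∑ l, max (v l) 0) 1) / n

lemma sproj_continuous {n : ℕ} (hn : 0 < n) : Continuous (sproj n) := by
  have hden : Continuous (fun v : Fin n → ℝ => max (∑ j, max (v j) 0) 1) := by
    exact (continuous_finset_sum _ fun j _ => (continuous_apply j).max continuous_const).max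
      continuous_const
  have hdenne : ∀ v : Fin n → ℝ, max (∑ j, max (v j) 0) 1 ≠ 0 := fun v => by positivity
  have hq : ∀ i : Fin n, Continuous (fun v : Fin n → ℝ => max (v i) 0 / max (∑ j, max (v j) 0) 1) :=
    fun i => ((continuous_apply i).max continuous_const).div hden hdenne
  refine continuous_pi fun i => ((hq i).add ?_)
  exact ((continuous_const.sub (continuous_finset_sum _ fun j _ => hq j)).div continuous_const
    (fun _ => (Nat.cast_pos.mpr hn).ne')).congr (fun v => rfl)

lemma sproj_mem {n : ℕ} (hn : 0 < n) (v : Fin n → ℝ) : sproj n v ∈ stdSimplex ℝ (Fin n) := by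
  have hS : (0:ℝ) ≤ ∑ j, max (v j) 0 := Finset.sum_nonneg fun j _ => le_max_right _ _
  set S : ℝ := ∑ j, max (v j) 0 with hSdef
  have hM1 : (1:ℝ) ≤ max S 1 := le_max_right _ _
  have hMpos : (0:ℝ) < max S 1 := lt_of_lt_of_le one_pos hM1
  have hqsum : ∑ j, max (v j) 0 / max S 1 = S / max S 1 := by
    rw [← Finset.sum_div]
  have hqle : S / max S 1 ≤ 1 := by
    rw [div_le_one hMpos]; exact le_max_left _ _
  have hnpos : (0:ℝ) < n := by exact_mod_cast hn
  constructor
  · intro i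
    have hq0 : 0 ≤ max (v i) 0 / max S 1 := div_nonneg (le_max_right _ _) hMpos.le
    have : 0 ≤ (1 - ∑ j, max (v j) 0 / max S 1) / n := by
      apply div_nonneg _ hnpos.le
      rw [hqsum]; linarith
    exact add_nonneg hq0 this
  · simp only [sproj]
    rw [Finset.sum_add_distrib, hqsum, Finset.sum_const, Finset.card_univ, Fintype.card_fin,
      nsmul_eq_mul]
    rw [mul_div_cancel₀ _ hnpos.ne']
    ring

lemma sproj_eq {n : ℕ} {v : Fin n → ℝ} (hv : v ∈ stdSimplex ℝ (Fin n)) : sproj n v = v := by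
  have h1 : ∀ j, max (v j) 0 = v j := fun j => max_eq_left (hv.1 j)
  have hS : ∑ j, max (v j) 0 = 1 := by simp only [h1]; exact hv.2
  funext i
  simp only [sproj, hS, max_self, div_one, h1, hv.2, sub_self, zero_div, add_zero]

/-! ### Closed form for continuous strategies -/

lemma Zpos {n m : ℕ} (hm : 0 < m) (η : ℝ) (A : Matrix (Fin n) (Fin m) ℝ)
    (h0 : Fin m → ℝ) (c : Fin n → ℝ) :
    0 < ∑ j, Real.exp (η * (h0 j - ∑ k, c k * A k j)) := by
  haveI : Nonempty (Fin m) := ⟨⟨0, hm⟩⟩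
  exact Finset.sum_pos (fun j _ => Real.exp_pos _) Finset.univ_nonempty

lemma contPlay_nonneg {n m : ℕ} (hm : 0 < m) {η : ℝ} (A : Matrix (Fin n) (Fin m) ℝ)
    (h0 : Fin m → ℝ) (x : ℝ → Fin n → ℝ) (t : ℝ) (i : Fin m) :
    0 ≤ contPlay η A h0 x t i :=
  div_nonneg (Real.exp_pos _).le (Zpos hm η A h0 _).le

lemma contPlay_le_one {n m : ℕ} (hm : 0 < m) {η : ℝ} (A : Matrix (Fin n) (Fin m) ℝ)
    (h0 : Fin m → ℝ) (x : ℝ → Fin n → ℝ) (t : ℝ) (i : Fin m) :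
    contPlay η A h0 x t i ≤ 1 := by
  rw [contPlay, div_le_one (Zpos hm η A h0 _)]
  exact Finset.single_le_sum (f := fun j => Real.exp (η * (h0 j - ∑ k, cumX x t k * A k j)))
    (fun j _ => (Real.exp_pos _).le) (Finset.mem_univ i)

lemma cumX_hasDerivAt {n : ℕ} {x : ℝ → Fin n → ℝ} (hx : Continuous x) (k : Fin n) (t : ℝ) :
    HasDerivAt (fun u => cumX x u k) (x t k) t :=
  (((continuous_apply k).comp hx).integral_hasStrictDerivAt 0 t).hasDerivAt

lemma cumX_continuous {n : ℕ} {x : ℝ → Fin n → ℝ} (hx : Continuous x) (k : Fin n) :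
    Continuous (fun u => cumX x u k) :=
  continuous_iff_continuousAt.2 fun t => (cumX_hasDerivAt hx k t).continuousAt

lemma contPlay_continuous {n m : ℕ} (hm : 0 < m) (η : ℝ) (A : Matrix (Fin n) (Fin m) ℝ)
    (h0 : Fin m → ℝ) {x : ℝ → Fin n → ℝ} (hx : Continuous x) (i : Fin m) :
    Continuous (fun t => contPlay η A h0 x t i) := by
  have hZ : ∀ j : Fin m, Continuous (fun t =>
      Real.exp (η * (h0 j - ∑ k, cumX x t k * A k j))) := fun j =>
    (Real.continuous_exp.comp (continuous_const.mul (continuous_const.sub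
      (continuous_finset_sum _ fun k _ => (cumX_continuous hx k).mul continuous_const))))
  exact (hZ i).div (continuous_finset_sum _ fun j _ => hZ j)
    (fun t => (Zpos hm η A h0 _).ne')

lemma integrand_continuous {n m : ℕ} (hm : 0 < m) (η : ℝ) (A : Matrix (Fin n) (Fin m) ℝ)
    (h0 : Fin m → ℝ) {x : ℝ → Fin n → ℝ} (hx : Continuous x) :
    Continuous (fun t => ∑ k, ∑ i, x t k * A k i * contPlay η A h0 x t i) :=
  continuous_finset_sum _ fun k _ => continuous_finset_sum _ fun i _ =>
    (((continuous_apply k).comp hx).mul continuous_const).mul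
      (contPlay_continuous hm η A h0 hx i)

lemma closedForm_cont {n m : ℕ} (hm : 0 < m) {η : ℝ} (hη : η ≠ 0) (T : ℝ)
    (A : Matrix (Fin n) (Fin m) ℝ) (h0 : Fin m → ℝ) {x : ℝ → Fin n → ℝ} (hx : Continuous x) :
    Rcont η A h0 T x =
      (1/η) * (Real.log (∑ i, Real.exp (η * h0 i)) -
        Real.log (∑ i, Real.exp (η * (h0 i - ∑ k, cumX x T k * A k i)))) := by
  set Z : ℝ → ℝ := fun t => ∑ j, Real.exp (η * (h0 j - ∑ k, cumX x t k * A k j)) with hZdef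
  have hZpos : ∀ t, 0 < Z t := fun t => Zpos hm η A h0 _
  set F : ℝ → ℝ := fun t => -(1/η) * Real.log (Z t) with hFdef
  have hF : ∀ t : ℝ, HasDerivAt F
      (∑ k, ∑ i, x t k * A k i * contPlay η A h0 x t i) t := by
    intro t
    have hZ' : HasDerivAt Z (∑ j, Real.exp (η * (h0 j - ∑ k, cumX x t k * A k j)) *
        (η * (0 - ∑ k, x t k * A k j))) t := by
      apply HasDerivAt.fun_sum
      intro j _
      exact (((hasDerivAt_const t (h0 j)).sub (HasDerivAt.fun_sum (fun k _ =>
        (cumX_hasDerivAt hx k t).mul_const (A k j)))).const_mul η).exp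
    have hlog := (hZ'.log (hZpos t).ne').const_mul (-(1/η))
    refine HasDerivAt.congr_deriv hlog ?_
    symm
    rw [Finset.sum_comm]
    have key : ∀ i : Fin m, (∑ k, x t k * A k i * contPlay η A h0 x t i)
        = -(1/η) * (Real.exp (η * (h0 i - ∑ k, cumX x t k * A k i)) *
            (η * (0 - ∑ k, x t k * A k i)) / Z t) := by
      intro i
      simp only [contPlay]
      rw [← Finset.sum_mul]
      have hz : (∑ j, Real.exp (η * (h0 j - ∑ k, cumX x t k * A k j))) ≠ 0 :=
        (Zpos hm η A h0 _).ne'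
      simp only [hZdef]
      field_simp
      ring
    rw [Finset.sum_congr rfl fun i _ => key i, ← Finset.mul_sum, Finset.sum_div]
  have hint : IntervalIntegrable
      (fun t => ∑ k, ∑ i, x t k * A k i * contPlay η A h0 x t i) volume 0 T :=
    (integrand_continuous hm η A h0 hx).intervalIntegrable 0 T
  have := intervalIntegral.integral_eq_sub_of_hasDerivAt (fun t _ => hF t) hint
  rw [Rcont, this]
  have hc0 : ∀ k : Fin n, cumX x 0 k = 0 := fun k => intervalIntegral.integral_same
  simp only [hFdef, hZdef, hc0, zero_mul, Finset.sum_const_zero, sub_zero]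
  ring

/-! ### Closed form for measurable strategies -/

lemma closedForm {n m : ℕ} (hn : 0 < n) (hm : 0 < m) {η T : ℝ} (hη : 0 < η) (hT : 0 < T)
    (A : Matrix (Fin n) (Fin m) ℝ) (h0 : Fin m → ℝ) (x : ℝ → Fin n → ℝ)
    (hmeas : Measurable x) (hx : ∀ t ∈ Set.Icc (0:ℝ) T, x t ∈ stdSimplex ℝ (Fin n)) :
    Rcont η A h0 T x =
      (1/η) * (Real.log (∑ i, Real.exp (η * h0 i)) -
        Real.log (∑ i, Real.exp (η * (h0 i - ∑ k, cumX x T k * A k i)))) := by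
  classical
  set f : ℝ → Fin n → ℝ := (Set.Icc (0:ℝ) T).indicator x with hfdef
  have hfmeas : Measurable f := hmeas.indicator measurableSet_Icc
  have hf_int : Integrable f (volume : Measure ℝ) := by
    rw [hfdef, integrable_indicator_iff measurableSet_Icc]
    refine Integrable.mono' (g := fun _ => (1:ℝ)) ?_ hmeas.aestronglyMeasurable.restrict ?_
    · exact integrableOn_const measure_Icc_lt_top.ne
    · filter_upwards [ae_restrict_mem measurableSet_Icc] with t ht
      exact simplex_norm_le (hx t ht)
  -- choose continuous approximations
  have hgex : ∀ j : ℕ, ∃ g : ℝ → Fin n → ℝ, Continuous g ∧ Integrable g volume ∧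
      (∫ t, ‖f t - g t‖) ≤ 1/((j:ℝ)+1) := by
    intro j
    obtain ⟨g, _, hle, hgc, hgi⟩ :=
      hf_int.exists_hasCompactSupport_integral_sub_le (ε := 1/((j:ℝ)+1)) (by positivity)
    exact ⟨g, hgc, hgi, hle⟩
  choose g hgc hgi hgle using hgex
  -- L¹ convergence
  have hL1 : Filter.Tendsto (fun j => eLpNorm (g j - f) 1 volume) Filter.atTop (nhds 0) := by
    have hub : ∀ j, eLpNorm (g j - f) 1 volume ≤ ENNReal.ofReal (1/((j:ℝ)+1)) := by
      intro j
      rw [eLpNorm_one_eq_lintegral_enorm,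
        ← ofReal_integral_norm_eq_lintegral_enorm ((hgi j).sub hf_int)]
      apply ENNReal.ofReal_le_ofReal
      calc ∫ t, ‖(g j - f) t‖ = ∫ t, ‖f t - g j t‖ := by
            congr 1; funext t; simp [norm_sub_rev]
        _ ≤ 1/((j:ℝ)+1) := hgle j
    have h0' : Filter.Tendsto (fun j : ℕ => ENNReal.ofReal (1/((j:ℝ)+1)))
        Filter.atTop (nhds 0) := by
      have := ENNReal.tendsto_ofReal (tendsto_one_div_add_atTop_nhds_zero_nat)
      simpa using this
    exact tendsto_of_tendsto_of_tendsto_of_le_of_le tendsto_const_nhds h0'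
      (fun j => zero_le) hub
  have htm : TendstoInMeasure volume g Filter.atTop f :=
    tendstoInMeasure_of_tendsto_eLpNorm one_ne_zero
      (fun j => (hgc j).aestronglyMeasurable) hfmeas.aestronglyMeasurable hL1
  obtain ⟨ns, -, hae⟩ := htm.exists_seq_tendsto_ae
  -- the projected continuous approximants
  set xk : ℕ → ℝ → Fin n → ℝ := fun j t => sproj n (g (ns j) t) with hxkdef
  have hxkc : ∀ j, Continuous (xk j) := fun j => (sproj_continuous hn).comp (hgc (ns j))
  have hxkmem : ∀ j t, xk j t ∈ stdSimplex ℝ (Fin n) := fun j t => sproj_mem hn _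
  have haek : ∀ᵐ t ∂(volume : Measure ℝ), t ∈ Set.Icc (0:ℝ) T →
      Filter.Tendsto (fun j => xk j t) Filter.atTop (nhds (x t)) := by
    filter_upwards [hae] with t ht hmem
    have h1 : Filter.Tendsto (fun j => sproj n (g (ns j) t)) Filter.atTop
        (nhds (sproj n (f t))) := ((sproj_continuous hn).continuousAt).tendsto.comp ht
    have h2 : f t = x t := Set.indicator_of_mem hmem x
    rw [h2, sproj_eq (hx t hmem)] at h1
    exact h1
  -- convergence of cumulative plays
  have hcum : ∀ t ∈ Set.Icc (0:ℝ) T, ∀ k : Fin n,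
      Filter.Tendsto (fun j => cumX (xk j) t k) Filter.atTop (nhds (cumX x t k)) := by
    intro t ht k
    have hsub : Set.uIoc (0:ℝ) t ⊆ Set.Icc (0:ℝ) T := by
      rw [Set.uIoc_of_le ht.1]
      exact fun s hs => ⟨hs.1.le, hs.2.trans ht.2⟩
    apply intervalIntegral.tendsto_integral_filter_of_dominated_convergence
      (bound := fun _ => (1:ℝ))
    · exact Filter.Eventually.of_forall fun j =>
        (((continuous_apply k).comp (hxkc j))).aestronglyMeasurable
    · refine Filter.Eventually.of_forall fun j => ae_of_all _ fun s _ => ?_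
      rw [Real.norm_eq_abs]
      exact simplex_abs_le (hxkmem j s) k
    · exact intervalIntegrable_const
    · filter_upwards [haek] with s hs hmem
      exact tendsto_pi_nhds.1 (hs (hsub hmem)) k
  -- convergence of rewards
  have hR : Filter.Tendsto (fun j => Rcont η A h0 T (xk j)) Filter.atTop
      (nhds (Rcont η A h0 T x)) := by
    have hsub : Set.uIoc (0:ℝ) T ⊆ Set.Icc (0:ℝ) T := by
      rw [Set.uIoc_of_le hT.le]
      exact fun s hs => ⟨hs.1.le, hs.2⟩
    apply intervalIntegral.tendsto_integral_filter_of_dominated_convergence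
      (bound := fun _ => ∑ k, ∑ i, |A k i|)
    · exact Filter.Eventually.of_forall fun j =>
        (integrand_continuous hm η A h0 (hxkc j)).aestronglyMeasurable
    · refine Filter.Eventually.of_forall fun j => ae_of_all _ fun s _ => ?_
      rw [Real.norm_eq_abs]
      calc |∑ k, ∑ i, xk j s k * A k i * contPlay η A h0 (xk j) s i|
          ≤ ∑ k, |∑ i, xk j s k * A k i * contPlay η A h0 (xk j) s i| :=
            Finset.abs_sum_le_sum_abs _ _
        _ ≤ ∑ k, ∑ i, |A k i| := by
            apply Finset.sum_le_sum
            intro k _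
            calc |∑ i, xk j s k * A k i * contPlay η A h0 (xk j) s i|
                ≤ ∑ i, |xk j s k * A k i * contPlay η A h0 (xk j) s i| :=
                  Finset.abs_sum_le_sum_abs _ _
              _ ≤ ∑ i, |A k i| := by
                  apply Finset.sum_le_sum
                  intro i _
                  rw [abs_mul, abs_mul]
                  have h1 : |xk j s k| ≤ 1 := simplex_abs_le (hxkmem j s) k
                  have h2 : |contPlay η A h0 (xk j) s i| ≤ 1 := by
                    rw [abs_of_nonneg (contPlay_nonneg hm A h0 _ s i)]
                    exact contPlay_le_one hm A h0 _ s i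
                  calc |xk j s k| * |A k i| * |contPlay η A h0 (xk j) s i|
                      ≤ 1 * |A k i| * 1 := by
                        apply mul_le_mul (mul_le_mul h1 le_rfl (abs_nonneg _) zero_le_one) h2
                          (abs_nonneg _) (by positivity)
                    _ = |A k i| := by ring
    · exact intervalIntegrable_const
    · filter_upwards [haek] with s hs hmem
      have hsIcc : s ∈ Set.Icc (0:ℝ) T := hsub hmem
      have hxs := hs hsIcc
      have hcums := hcum s hsIcc
      have harg : ∀ i' : Fin m, Filter.Tendsto
          (fun j => η * (h0 i' - ∑ k', cumX (xk j) s k' * A k' i')) Filter.atTop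
          (nhds (η * (h0 i' - ∑ k', cumX x s k' * A k' i'))) := fun i' =>
        (tendsto_const_nhds.sub (tendsto_finset_sum _ fun k' _ =>
          (hcums k').mul_const _)).const_mul η
      have hexp : ∀ i' : Fin m, Filter.Tendsto
          (fun j => Real.exp (η * (h0 i' - ∑ k', cumX (xk j) s k' * A k' i'))) Filter.atTop
          (nhds (Real.exp (η * (h0 i' - ∑ k', cumX x s k' * A k' i')))) := fun i' =>
        (Real.continuous_exp.continuousAt.tendsto).comp (harg i')
      apply tendsto_finset_sum
      intro k _
      apply tendsto_finset_sum
      intro i _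
      exact ((tendsto_pi_nhds.1 hxs k).mul_const (A k i)).mul
        ((hexp i).div (tendsto_finset_sum _ fun i' _ => hexp i') (Zpos hm η A h0 _).ne')
  -- convergence of the closed forms
  have hRHS : Filter.Tendsto (fun j =>
      (1/η) * (Real.log (∑ i, Real.exp (η * h0 i)) -
        Real.log (∑ i, Real.exp (η * (h0 i - ∑ k, cumX (xk j) T k * A k i)))))
      Filter.atTop
      (nhds ((1/η) * (Real.log (∑ i, Real.exp (η * h0 i)) -
        Real.log (∑ i, Real.exp (η * (h0 i - ∑ k, cumX x T k * A k i)))))) := by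
    have hcumT := hcum T ⟨hT.le, le_refl T⟩
    have harg : ∀ i' : Fin m, Filter.Tendsto
        (fun j => η * (h0 i' - ∑ k', cumX (xk j) T k' * A k' i')) Filter.atTop
        (nhds (η * (h0 i' - ∑ k', cumX x T k' * A k' i'))) := fun i' =>
      (tendsto_const_nhds.sub (tendsto_finset_sum _ fun k' _ =>
        (hcumT k').mul_const _)).const_mul η
    have hexp : ∀ i' : Fin m, Filter.Tendsto
        (fun j => Real.exp (η * (h0 i' - ∑ k', cumX (xk j) T k' * A k' i'))) Filter.atTop
        (nhds (Real.exp (η * (h0 i' - ∑ k', cumX x T k' * A k' i')))) := fun i' =>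
      (Real.continuous_exp.continuousAt.tendsto).comp (harg i')
    have hsum := tendsto_finset_sum Finset.univ fun i' (_ : i' ∈ Finset.univ) => hexp i'
    have hlog := ((Real.continuousAt_log (Zpos hm η A h0 (cumX x T)).ne').tendsto).comp hsum
    exact (tendsto_const_nhds.sub hlog).const_mul (1/η)
  have heq : ∀ j, Rcont η A h0 T (xk j) =
      (1/η) * (Real.log (∑ i, Real.exp (η * h0 i)) -
        Real.log (∑ i, Real.exp (η * (h0 i - ∑ k, cumX (xk j) T k * A k i)))) :=
    fun j => closedForm_cont hm hη.ne' T A h0 (hxkc j)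
  have hR' : Filter.Tendsto (fun j =>
      (1/η) * (Real.log (∑ i, Real.exp (η * h0 i)) -
        Real.log (∑ i, Real.exp (η * (h0 i - ∑ k, cumX (xk j) T k * A k i)))))
      Filter.atTop (nhds (Rcont η A h0 T x)) := by
    refine hR.congr fun j => heq j
  exact tendsto_nhds_unique hR' hRHS

/-- closed form of the continuous-time reward, and the fact that it only
depends on the strategy through `∫_0^T x(s) ds`. -/
theorem stmt0 {n m : ℕ} (hn : 0 < n) (hm : 0 < m) (η T : ℝ) (hη : 0 < η) (hT : 0 < T)
    (A : Matrix (Fin n) (Fin m) ℝ) (h0 : Fin m → ℝ) (x : ℝ → Fin n → ℝ)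
    (hmeas : Measurable x) (hx : ∀ t ∈ Set.Icc (0:ℝ) T, x t ∈ stdSimplex ℝ (Fin n)) :
    Rcont η A h0 T x =
      (1/η) * (Real.log (∑ i, Real.exp (η * h0 i)) -
        Real.log (∑ i, Real.exp (η * (h0 i - ∑ k, cumX x T k * A k i)))) ∧
    ∀ x' : ℝ → Fin n → ℝ, Measurable x' →
      (∀ t ∈ Set.Icc (0:ℝ) T, x' t ∈ stdSimplex ℝ (Fin n)) →
      (∀ k, cumX x' T k = cumX x T k) →
      Rcont η A h0 T x' = Rcont η A h0 T x := by
  constructor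
  · exact closedForm hn hm hη hT A h0 x hmeas hx
  · intro x' hmeas' hx' hcumeq
    rw [closedForm hn hm hη hT A h0 x' hmeas' hx', closedForm hn hm hη hT A h0 x hmeas hx]
    simp only [hcumeq]
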